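/- For every dimension d there is a constant C = C(d) > 0 such that the following holds: for every q ∈ ℝ^d, every grid side length s > 0, and every ℓ ≥ 0, the number of cells of the grid {sz + [0, s)^d : z ∈ ℤ^d} that intersect the closed annulus {x ∈ ℝ^d : ℓ ≤ ‖x − q‖ ≤ ℓ + s√d} is at most C · (ℓ/(s√d) + 1)^{d−1}. -/

import Mathlib

open Metric MeasureTheory Set

private lemma pow_sub_pow_le_ann {x y : ℝ} (hy : 0 ≤ y) (hxy : y ≤ x) (n : ℕ) :
    x ^ n - y ^ n ≤ n * x ^ (n - 1) * (x - y) := by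
  have hx : 0 ≤ x := hy.trans hxy
  rw [← geom_sum₂_mul]
  have hb : (∑ i ∈ Finset.range n, x ^ i * y ^ (n - 1 - i)) ≤ n * x ^ (n - 1) := by
    calc (∑ i ∈ Finset.range n, x ^ i * y ^ (n - 1 - i))
        ≤ ∑ _i ∈ Finset.range n, x ^ (n - 1) := by
          apply Finset.sum_le_sum
          intro i hi
          have hi' : i ≤ n - 1 := Nat.le_pred_of_lt (Finset.mem_range.1 hi)
          calc x ^ i * y ^ (n - 1 - i) ≤ x ^ i * x ^ (n - 1 - i) :=
                mul_le_mul_of_nonneg_left (pow_le_pow_left₀ hy hxy _) (pow_nonneg hx i)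
            _ = x ^ (n - 1) := by rw [← pow_add, Nat.add_sub_cancel' hi']
      _ = n * x ^ (n - 1) := by simp [Finset.sum_const, nsmul_eq_mul]
  exact mul_le_mul_of_nonneg_right hb (sub_nonneg.2 hxy)

private def annCell (d : ℕ) (s : ℝ) (z : Fin d → ℤ) : Set (EuclideanSpace ℝ (Fin d)) :=
  {x | ∀ i, x i ∈ Set.Ico (s * z i) (s * z i + s)}

private lemma mem_annCell {d : ℕ} {s : ℝ} {z : Fin d → ℤ} {x : EuclideanSpace ℝ (Fin d)} :
    x ∈ annCell d s z ↔ ∀ i, x i ∈ Set.Ico (s * z i) (s * z i + s) := Iff.rfl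

private lemma annCell_eq_preimage (d : ℕ) (s : ℝ) (z : Fin d → ℤ) :
    annCell d s z = (MeasurableEquiv.toLp 2 (Fin d → ℝ)).symm ⁻¹'
      (Set.univ.pi fun i => Set.Ico (s * z i) (s * z i + s)) := by
  ext x
  simp [annCell, Set.mem_pi, MeasurableEquiv.coe_toLp_symm]

private lemma annCell_measurable (d : ℕ) (s : ℝ) (z : Fin d → ℤ) :
    MeasurableSet (annCell d s z) := by
  rw [annCell_eq_preimage]
  exact (MeasurableEquiv.toLp 2 (Fin d → ℝ)).symm.measurable
    (MeasurableSet.univ_pi fun i => measurableSet_Ico)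

private lemma annCell_volume (d : ℕ) {s : ℝ} (_hs : 0 < s) (z : Fin d → ℤ) :
    volume (annCell d s z) = ENNReal.ofReal s ^ d := by
  rw [annCell_eq_preimage,
    (EuclideanSpace.volume_preserving_symm_measurableEquiv_toLp (Fin d)).measure_preimage
      ((MeasurableSet.univ_pi fun i => measurableSet_Ico).nullMeasurableSet),
    volume_pi_pi]
  simp [Real.volume_Ico]

/-- Packing bound: for every dimension `d ≥ 1` there is a constant `C = C(d) > 0` such
that for every center `q`, grid side length `s > 0` and inner radius `ℓ ≥ 0`, the number
of grid cells `sz + [0, s)^d` meeting the closed annulus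
`{x : ℓ ≤ ‖x - q‖ ≤ ℓ + s√d}` is at most `C (ℓ/(s√d) + 1)^{d-1}`. -/
theorem grid_cells_meeting_annulus_bound (d : ℕ) (hd : 0 < d) :
    ∃ C : ℝ, 0 < C ∧
      ∀ (q : EuclideanSpace ℝ (Fin d)) (s ℓ : ℝ), 0 < s → 0 ≤ ℓ →
        (({z : Fin d → ℤ | ∃ x : EuclideanSpace ℝ (Fin d),
            (∀ i, x i ∈ Set.Ico (s * z i) (s * z i + s)) ∧
            ℓ ≤ dist x q ∧ dist x q ≤ ℓ + s * Real.sqrt d}.ncard : ℝ)) ≤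
          C * (ℓ / (s * Real.sqrt d) + 1) ^ (d - 1) := by
  classical
  haveI : Nonempty (Fin d) := ⟨⟨0, hd⟩⟩
  haveI : Nontrivial (EuclideanSpace ℝ (Fin d)) := by
    apply Module.nontrivial_of_finrank_pos (R := ℝ)
    rw [finrank_euclideanSpace_fin]; exact hd
  have hd' : (0 : ℝ) < d := by exact_mod_cast hd
  have hsd : 0 < Real.sqrt d := Real.sqrt_pos.2 hd'
  set c := volume (ball (0 : EuclideanSpace ℝ (Fin d)) 1) with hc_def
  have hc0 : 0 < c.toReal :=
    ENNReal.toReal_pos (measure_ball_pos _ _ one_pos).ne' measure_ball_lt_top.ne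
  refine ⟨3 * d * 2 ^ (d - 1) * Real.sqrt d ^ d * c.toReal, ?_, ?_⟩
  · exact mul_pos (mul_pos (mul_pos (mul_pos (by norm_num) hd')
      (pow_pos two_pos _)) (pow_pos hsd _)) hc0
  intro q s ℓ hs hℓ
  set S : Set (Fin d → ℤ) := {z : Fin d → ℤ | ∃ x : EuclideanSpace ℝ (Fin d),
      (∀ i, x i ∈ Set.Ico (s * z i) (s * z i + s)) ∧
      ℓ ≤ dist x q ∧ dist x q ≤ ℓ + s * Real.sqrt d} with hS_def
  set t := s * Real.sqrt d with ht_def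
  have ht : 0 < t := mul_pos hs hsd
  set u := ℓ / t with hu_def
  have hu0 : 0 ≤ u := div_nonneg hℓ ht.le
  have hRHS : (0:ℝ) ≤ 3 * d * 2 ^ (d - 1) * Real.sqrt d ^ d * c.toReal * (u + 1) ^ (d - 1) := by
    have := hc0.le
    positivity
  by_cases hfin : S.Finite
  swap
  · rw [Set.Infinite.ncard hfin]
    simpa using hRHS
  -- finite case
  set F := hfin.toFinset with hF_def
  have hcard : S.ncard = F.card := Set.ncard_eq_toFinset_card S hfin
  -- diameter of a cell
  have hdiam : ∀ (z : Fin d → ℤ) (x y : EuclideanSpace ℝ (Fin d)),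
      x ∈ annCell d s z → y ∈ annCell d s z → dist x y ≤ t := by
    intro z x y hx hy
    rw [EuclideanSpace.dist_eq]
    have hsum : (∑ i, dist (x i) (y i) ^ 2) ≤ (d : ℝ) * s ^ 2 := by
      have h0 : (∑ _i : Fin d, s ^ 2) = (d : ℝ) * s ^ 2 := by
        simp [Finset.sum_const, Finset.card_univ, nsmul_eq_mul]
      rw [← h0]
      apply Finset.sum_le_sum
      intro i _
      have h1 := hx i
      have h2 := hy i
      have habs : |x i - y i| ≤ s := by
        rw [abs_sub_le_iff]
        exact ⟨by linarith [h1.1, h1.2, h2.1, h2.2], by linarith [h1.1, h1.2, h2.1, h2.2]⟩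
      calc dist (x i) (y i) ^ 2 = |x i - y i| ^ 2 := by rw [Real.dist_eq]
        _ ≤ s ^ 2 := by nlinarith [abs_nonneg (x i - y i)]
    calc Real.sqrt (∑ i, dist (x i) (y i) ^ 2) ≤ Real.sqrt ((d : ℝ) * s ^ 2) :=
          Real.sqrt_le_sqrt hsum
      _ = t := by
          rw [Real.sqrt_mul (le_of_lt hd'), Real.sqrt_sq hs.le, ht_def]; ring
  -- cells are pairwise disjoint
  have hkeyint : ∀ m k : ℤ, ∀ v : ℝ, v ∈ Set.Ico (s * m) (s * m + s) →
      v ∈ Set.Ico (s * k) (s * k + s) → m = k := by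
    intro m k v hv hw
    by_contra hmk
    rcases lt_or_gt_of_ne hmk with h | h
    · have h1 : (m : ℝ) + 1 ≤ k := by exact_mod_cast Int.add_one_le_iff.2 h
      have h2 : s * ((m : ℝ) + 1) ≤ s * k := mul_le_mul_of_nonneg_left h1 hs.le
      have := hv.2; have := hw.1
      nlinarith
    · have h1 : (k : ℝ) + 1 ≤ m := by exact_mod_cast Int.add_one_le_iff.2 h
      have h2 : s * ((k : ℝ) + 1) ≤ s * m := mul_le_mul_of_nonneg_left h1 hs.le
      have := hw.2; have := hv.1
      nlinarith
  have hdisj : Set.PairwiseDisjoint (F : Set (Fin d → ℤ)) (annCell d s) := by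
    intro a _ b _ hab
    refine Set.disjoint_left.2 fun x hxa hxb => hab ?_
    funext i
    exact hkeyint (a i) (b i) (x i) (hxa i) (hxb i)
  -- each cell of S is inside the thickened annulus
  have hsub : ∀ z ∈ F, annCell d s z ⊆ closedBall q (ℓ + 2 * t) \ ball q (ℓ - t) := by
    intro z hz x hx
    have hzS : z ∈ S := (Set.Finite.mem_toFinset hfin).1 hz
    obtain ⟨y, hy, hy1, hy2⟩ := hzS
    have hxy : dist x y ≤ t := hdiam z x y hx hy
    constructor
    · rw [mem_closedBall]
      calc dist x q ≤ dist x y + dist y q := dist_triangle _ _ _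
        _ ≤ t + (ℓ + t) := by rw [ht_def] at hxy ⊢; linarith [hy2]
        _ = ℓ + 2 * t := by ring
    · intro hmem
      rw [mem_ball] at hmem
      have : dist y q ≤ dist y x + dist x q := dist_triangle _ _ _
      rw [dist_comm y x] at this
      linarith [hy1]
  have hR0 : (0:ℝ) ≤ ℓ + 2 * t := by linarith
  -- measure comparison
  have hmeas_le : (F.card : ENNReal) * ENNReal.ofReal s ^ d ≤
      volume (closedBall q (ℓ + 2 * t) \ ball q (ℓ - t)) := by
    have h1 : volume (⋃ z ∈ F, annCell d s z) = ∑ z ∈ F, volume (annCell d s z) :=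
      measure_biUnion_finset hdisj (fun z _ => annCell_measurable d s z)
    have h2 : (⋃ z ∈ F, annCell d s z) ⊆ closedBall q (ℓ + 2 * t) \ ball q (ℓ - t) :=
      Set.iUnion₂_subset hsub
    calc (F.card : ENNReal) * ENNReal.ofReal s ^ d = ∑ z ∈ F, volume (annCell d s z) := by
          simp [annCell_volume d hs, Finset.sum_const, nsmul_eq_mul]
      _ = volume (⋃ z ∈ F, annCell d s z) := h1.symm
      _ ≤ _ := measure_mono h2
  -- annulus measure bound
  have hann : volume (closedBall q (ℓ + 2 * t) \ ball q (ℓ - t)) ≤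
      ENNReal.ofReal (3 * d * t * (ℓ + 2 * t) ^ (d - 1)) * c := by
    set r' := max (ℓ - t) 0 with hr'_def
    have hr'0 : 0 ≤ r' := le_max_right _ _
    have hr'le : r' ≤ ℓ + 2 * t := max_le (by linarith) hR0
    have hball_eq : ball q (ℓ - t) = ball q r' := by
      rw [hr'_def]
      rcases le_total (ℓ - t) 0 with h | h
      · rw [ball_eq_empty.2 h, max_eq_right h]
        exact (ball_eq_empty.2 le_rfl).symm
      · rw [max_eq_left h]
    rw [hball_eq, measure_diff ((ball_subset_ball hr'le).trans ball_subset_closedBall)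
      measurableSet_ball.nullMeasurableSet measure_ball_lt_top.ne,
      Measure.addHaar_closedBall volume q hR0, Measure.addHaar_ball volume q hr'0,
      finrank_euclideanSpace_fin]
    have hkey : (ℓ + 2 * t) ^ d - r' ^ d ≤ 3 * d * t * (ℓ + 2 * t) ^ (d - 1) := by
      have h1 : (ℓ + 2 * t) - r' ≤ 3 * t := by
        have := le_max_left (ℓ - t) 0
        linarith
      have h2 := pow_sub_pow_le_ann hr'0 hr'le d
      have h3 : (d : ℝ) * (ℓ + 2 * t) ^ (d - 1) * ((ℓ + 2 * t) - r') ≤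
          (d : ℝ) * (ℓ + 2 * t) ^ (d - 1) * (3 * t) :=
        mul_le_mul_of_nonneg_left h1 (by positivity)
      nlinarith [h2, h3]
    rw [← hc_def]
    apply tsub_le_iff_right.2
    rw [← add_mul, ← ENNReal.ofReal_add (by positivity) (by positivity)]
    refine mul_le_mul_left (ENNReal.ofReal_le_ofReal ?_) c
    linarith [hkey]
  -- move to the reals
  have hreal : (F.card : ℝ) * s ^ d ≤ 3 * d * t * (ℓ + 2 * t) ^ (d - 1) * c.toReal := by
    have hle := hmeas_le.trans hann
    have hne : ENNReal.ofReal (3 * d * t * (ℓ + 2 * t) ^ (d - 1)) * c ≠ ⊤ :=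
      ENNReal.mul_ne_top ENNReal.ofReal_ne_top measure_ball_lt_top.ne
    have h := ENNReal.toReal_mono hne hle
    rwa [ENNReal.toReal_mul, ENNReal.toReal_mul, ENNReal.toReal_pow, ENNReal.toReal_natCast,
      ENNReal.toReal_ofReal hs.le, ENNReal.toReal_ofReal (by positivity)] at h
  -- final algebra
  have hl_eq : ℓ = u * t := by rw [hu_def, div_mul_cancel₀ _ ht.ne']
  have hfinal : 3 * d * t * (ℓ + 2 * t) ^ (d - 1) * c.toReal ≤
      3 * d * 2 ^ (d - 1) * Real.sqrt d ^ d * c.toReal * (u + 1) ^ (d - 1) * s ^ d := by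
    have hR_le : ℓ + 2 * t ≤ 2 * t * (u + 1) := by nlinarith [mul_nonneg hu0 ht.le]
    have hpowle : (ℓ + 2 * t) ^ (d - 1) ≤ (2 * t) ^ (d - 1) * (u + 1) ^ (d - 1) := by
      rw [← mul_pow]; exact pow_le_pow_left₀ hR0 hR_le _
    have hde : d - 1 + 1 = d := Nat.succ_pred_eq_of_pos hd
    have h1 : t * t ^ (d - 1) = t ^ d := by
      conv_rhs => rw [← hde, pow_succ']
    have h2 : t ^ d = s ^ d * Real.sqrt d ^ d := by rw [ht_def, mul_pow]
    calc 3 * ↑d * t * (ℓ + 2 * t) ^ (d - 1) * c.toReal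
        ≤ 3 * ↑d * t * ((2 * t) ^ (d - 1) * (u + 1) ^ (d - 1)) * c.toReal := by
          apply mul_le_mul_of_nonneg_right _ hc0.le
          apply mul_le_mul_of_nonneg_left hpowle
          positivity
      _ = 3 * ↑d * 2 ^ (d - 1) * (t * t ^ (d - 1)) * (u + 1) ^ (d - 1) * c.toReal := by
          rw [mul_pow]; ring
      _ = 3 * ↑d * 2 ^ (d - 1) * (s ^ d * Real.sqrt d ^ d) * (u + 1) ^ (d - 1) * c.toReal := by
          rw [h1, h2]
      _ = 3 * ↑d * 2 ^ (d - 1) * Real.sqrt d ^ d * c.toReal * (u + 1) ^ (d - 1) * s ^ d := by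
          ring
  rw [hcard]
  have hspow : (0:ℝ) < s ^ d := pow_pos hs d
  have hchain : (F.card : ℝ) * s ^ d ≤
      (3 * d * 2 ^ (d - 1) * Real.sqrt d ^ d * c.toReal * (u + 1) ^ (d - 1)) * s ^ d := by
    calc (F.card : ℝ) * s ^ d ≤ 3 * d * t * (ℓ + 2 * t) ^ (d - 1) * c.toReal := hreal
      _ ≤ 3 * d * 2 ^ (d - 1) * Real.sqrt d ^ d * c.toReal * (u + 1) ^ (d - 1) * s ^ d := hfinal
  exact le_of_mul_le_mul_right hchain hspow
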